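/- Let Λ be a compact invariant set of a C¹ vector field X with a dominated splitting T_Λ M = E ⊕ F with respect to the tangent flow, and suppose X(x) ∈ F(x) for all x ∈ Λ. If x ∈ Λ is a point whose ω-limit set contains a regular point y (X(y) ≠ 0), then there exists t_x > 0 with ‖Φ_{t_x}|_{E(x)}‖ < 1. -/
import Mathlib


open Set Metric Filter Module

/-- A continuous flow on a metric space. -/
def IsFlow {M : Type*} [MetricSpace M] (φ : ℝ → M → M) : Prop :=
  Continuous (fun p : ℝ × M => φ p.1 p.2) ∧ (∀ x, φ 0 x = x) ∧
    ∀ s t x, φ (s + t) x = φ s (φ t x)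

variable {M : Type*} [MetricSpace M]
variable {V : Type*} [NormedAddCommGroup V] [NormedSpace ℝ V]

/-- A linear cocycle over the flow `φ`, modelling the tangent flow `Φ_t`. -/
def IsCocycleOver (φ : ℝ → M → M) (A : ℝ → M → V →L[ℝ] V) : Prop :=
  (∀ x, A 0 x = ContinuousLinearMap.id ℝ V) ∧
    ∀ s t x, A (s + t) x = (A s (φ t x)).comp (A t x)

/-- Invariance of a subbundle `E` under the cocycle `A` over points of `Λ`. -/
def InvariantBundle (φ : ℝ → M → M) (A : ℝ → M → V →L[ℝ] V) (Λ : Set M)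
    (E : M → Submodule ℝ V) : Prop :=
  ∀ x ∈ Λ, ∀ t : ℝ, ∀ v ∈ E x, A t x v ∈ E (φ t x)

/-- A dominated splitting `E ⊕ F` over `Λ` for the cocycle `A` over the flow `φ`:
the bundles are complementary, invariant, and satisfy
`‖Φ_t|_{E(x)}‖ · ‖Φ_{−t}|_{F(φ_t(x))}‖ ≤ C e^{−λ t}` (in ratio form). -/
def DominatedOn (φ : ℝ → M → M) (A : ℝ → M → V →L[ℝ] V) (Λ : Set M)
    (E F : M → Submodule ℝ V) : Prop :=
  (∀ x ∈ Λ, E x ⊓ F x = ⊥ ∧ E x ⊔ F x = ⊤) ∧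
    InvariantBundle φ A Λ E ∧ InvariantBundle φ A Λ F ∧
    ∃ C > 0, ∃ lam > 0, ∀ x ∈ Λ, ∀ t > 0, ∀ u ∈ E x, ∀ v ∈ F x,
      ‖A t x u‖ * ‖v‖ ≤ C * Real.exp (-lam * t) * (‖u‖ * ‖A t x v‖)

/-- If `X(x) ∈ F(x)` on all of `Λ` and the ω-limit set of `x ∈ Λ` contains a regular
point `y`, then some time-`t` tangent map contracts `E(x)`: `‖Φ_{t_x}|_{E(x)}‖ < 1`. -/
theorem eventual_contraction_of_regular_omega_limit [FiniteDimensional ℝ V]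
    (φ : ℝ → M → M) (hφ : IsFlow φ) (A : ℝ → M → V →L[ℝ] V)
    (hA : IsCocycleOver φ A) (hAc : Continuous fun p : ℝ × M => A p.1 p.2)
    (X : M → V) (hXc : Continuous X)
    (hXinv : ∀ (x : M) (t : ℝ), A t x (X x) = X (φ t x))
    (Λ : Set M) (hΛc : IsCompact Λ) (hΛi : ∀ t : ℝ, φ t '' Λ = Λ)
    (E F : M → Submodule ℝ V) (hEF : DominatedOn φ A Λ E F)
    (hXF : ∀ x ∈ Λ, X x ∈ F x)
    (x : M) (hx : x ∈ Λ)
    (y : M) (tn : ℕ → ℝ) (htn : Tendsto tn atTop atTop)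
    (hωy : Tendsto (fun n => φ (tn n) x) atTop (nhds y))
    (hyreg : X y ≠ 0) :
    ∃ t > (0 : ℝ), ∃ c < (1 : ℝ), ∀ u ∈ E x, ‖A t x u‖ ≤ c * ‖u‖ := by
  obtain ⟨hcomp, hEinv, hFinv, C, hC, lam, hlam, hdom⟩ := hEF
  have hXx : X x ≠ 0 := by
    intro h
    apply hyreg
    have hzero : (fun n => X (φ (tn n) x)) = fun _ => (0 : V) := by
      funext n
      rw [← hXinv x (tn n), h, map_zero]
    have h1 : Tendsto (fun n => X (φ (tn n) x)) atTop (nhds (X y)) :=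
      (hXc.tendsto y).comp hωy
    rw [hzero] at h1
    exact tendsto_nhds_unique h1 tendsto_const_nhds
  have hK : 0 < ‖X x‖ := norm_pos_iff.mpr hXx
  have hexp : Tendsto (fun n => Real.exp (-lam * tn n)) atTop (nhds 0) := by
    apply Real.tendsto_exp_atBot.comp
    have : Tendsto (fun n => lam * tn n) atTop atTop := htn.const_mul_atTop hlam
    simpa [neg_mul, Function.comp_def] using tendsto_neg_atTop_atBot.comp this
  have hXn : Tendsto (fun n => ‖X (φ (tn n) x)‖) atTop (nhds ‖X y‖) :=
    ((hXc.tendsto y).comp hωy).norm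
  have htend : Tendsto (fun n => C * Real.exp (-lam * tn n) * ‖X (φ (tn n) x)‖)
      atTop (nhds 0) := by
    have := ((tendsto_const_nhds (x := C)).mul hexp).mul hXn
    simpa using this
  have hev : ∀ᶠ n in atTop,
      C * Real.exp (-lam * tn n) * ‖X (φ (tn n) x)‖ < ‖X x‖ :=
    htend.eventually (gt_mem_nhds hK)
  have hpos : ∀ᶠ n in atTop, 0 < tn n := htn.eventually_gt_atTop 0
  obtain ⟨n, h1, h2⟩ := (hev.and hpos).exists
  refine ⟨tn n, h2, C * Real.exp (-lam * tn n) * ‖X (φ (tn n) x)‖ / ‖X x‖,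
    (div_lt_one hK).mpr h1, ?_⟩
  intro u hu
  have hd := hdom x hx (tn n) h2 u hu (X x) (hXF x hx)
  rw [hXinv x (tn n)] at hd
  rw [div_mul_eq_mul_div, le_div_iff₀ hK]
  nlinarith [norm_nonneg (A (tn n) x u), norm_nonneg u]
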